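/- arXiv:2005.12451 — 2 statements merged into one kernel-verified Lean document; each statement's English description precedes it below -/
import Mathlib

section
/- (Characterization of balanced vanishing moments.) Let N be a d×d integer matrix with |det N| = r ≥ 2, Γ_N = {s₁,…,s_r} a complete set of representatives of ℤ^d/[Nℤ^d] with s₁ = 0, and define the vector conversion operator E_N : l(ℤ^d) → (l(ℤ^d))^{1×r} by [E_N v](k) := (v(Nk+s₁),…,v(Nk+s_r)) and \widehat{Υ_N}(ξ) := (e^{iN^{−1}s₁·ξ},…,e^{iN^{−1}s_r·ξ}). Then a filter b ∈ (l₀(ℤ^d))^{s×r} satisfies T_{b,M} E_N(p) = 0 for all polynomial sequences p of degree < m (i.e., b has order m E_N-balanced vanishing moments) if and only if \widehat{Υ_N}(ξ) \overline{\widehat{b}(ξ)}^T = O(‖ξ‖^m) as ξ → 0. -/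
open scoped BigOperators Classical
open Complex Matrix

noncomputable section

abbrev Zd (d : ℕ) := Fin d → ℤ
abbrev Rd (d : ℕ) := Fin d → ℝ

/-- real dot product `k·ξ` of an integer vector with a real vector -/
def dotZR {d : ℕ} (k : Zd d) (ξ : Rd d) : ℝ := ∑ j, (k j : ℝ) * ξ j

/-- complex dot product of an integer vector with a complex vector -/
def dotZC {d : ℕ} (k : Zd d) (ξ : Fin d → ℂ) : ℂ := ∑ j, (k j : ℂ) * ξ j

/-- the symbol (Fourier series) `û(ξ) = Σ_k u(k) e^{-ik·ξ}` of a finitely supported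
matrix-valued filter -/
def symbol {d r s : ℕ} (u : Zd d →₀ Matrix (Fin r) (Fin s) ℂ) (ξ : Rd d) :
    Matrix (Fin r) (Fin s) ℂ :=
  u.sum fun k A => Complex.exp (-(Complex.I * (dotZR k ξ : ℂ))) • A

/-- the symbol evaluated at a complex frequency `ξ ∈ ℂ^d` -/
def symbolC {d r s : ℕ} (u : Zd d →₀ Matrix (Fin r) (Fin s) ℂ) (ξ : Fin d → ℂ) :
    Matrix (Fin r) (Fin s) ℂ :=
  u.sum fun k A => Complex.exp (-(Complex.I * dotZC k ξ)) • A

/-- symbol of a scalar filter -/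
def symbolS {d : ℕ} (u : Zd d →₀ ℂ) (ξ : Rd d) : ℂ :=
  u.sum fun k c => Complex.exp (-(Complex.I * (dotZR k ξ : ℂ))) * c

/-- a filter is strongly invertible if the inverse of its symbol is again a matrix of
`2πℤ^d`-periodic trigonometric polynomials -/
def StronglyInvertible {d r : ℕ} (u : Zd d →₀ Matrix (Fin r) (Fin r) ℂ) : Prop :=
  ∃ v : Zd d →₀ Matrix (Fin r) (Fin r) ℂ,
    ∀ ξ : Rd d, symbol u ξ * symbol v ξ = 1 ∧ symbol v ξ * symbol u ξ = 1

/-- convolution `[v * u](n) = Σ_k v(k) u(n-k)` of an arbitrary (row-vector valued)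
sequence with a finitely supported matrix filter -/
def convSeq {d r s : ℕ} (v : Zd d → Matrix (Fin 1) (Fin r) ℂ)
    (u : Zd d →₀ Matrix (Fin r) (Fin s) ℂ) : Zd d → Matrix (Fin 1) (Fin s) ℂ :=
  fun n => u.sum fun k A => v (n - k) * A

/-- `f(ξ) = O(‖ξ‖^m)` as `ξ → 0`: all partial derivatives of total order `< m`
vanish at the origin -/
def vanishesTo {d : ℕ} (m : ℕ) (f : Rd d → ℂ) : Prop :=
  ∀ j, j < m → iteratedFDeriv ℝ j f 0 = 0

/-- `M^T ξ` for an integer matrix `M` and a real vector `ξ` -/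
def mulVecT {d : ℕ} (M : Matrix (Fin d) (Fin d) ℤ) (ξ : Rd d) : Rd d :=
  fun i => ∑ j, (M j i : ℝ) * ξ j

/-- `M k` for an integer matrix `M` and an integer vector `k` -/
def mulVecZ {d : ℕ} (M : Matrix (Fin d) (Fin d) ℤ) (k : Zd d) : Zd d :=
  fun i => ∑ j, M i j * k j

/-- `Ω_M := (M^{-T} ℤ^d) ∩ [0,1)^d` -/
def OmegaSet {d : ℕ} (M : Matrix (Fin d) (Fin d) ℤ) : Set (Rd d) :=
  {ω | (∀ i, ∃ z : ℤ, mulVecT M ω i = (z : ℝ)) ∧ ∀ i, 0 ≤ ω i ∧ ω i < 1}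

/-- a dilation matrix: an integer matrix all of whose (complex) eigenvalues
are greater than one in modulus -/
def IsDilation {d : ℕ} (M : Matrix (Fin d) (Fin d) ℤ) : Prop :=
  ∀ μ ∈ spectrum ℂ (M.map fun z => (z : ℂ)), 1 < ‖μ‖

/-- `a` has order `m` sum rules with respect to `M` with matching filter `vgu` -/
def HasSumRules {d r : ℕ} (M : Matrix (Fin d) (Fin d) ℤ) (m : ℕ)
    (a : Zd d →₀ Matrix (Fin r) (Fin r) ℂ)
    (vgu : Zd d →₀ Matrix (Fin 1) (Fin r) ℂ) : Prop :=
  symbol vgu 0 ≠ 0 ∧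
  ∀ ω ∈ OmegaSet M, ∀ i : Fin r,
    vanishesTo m (fun ξ =>
      (symbol vgu (mulVecT M ξ) * symbol a (ξ + (2 * Real.pi) • ω)) 0 i -
      (if ω = (0 : Rd d) then 1 else 0) * (symbol vgu ξ) 0 i)

/-- the symbol of the `γ`-coset sequence `u^{[γ;M]}(k) = u(γ + Mk)` -/
def cosetSymbol {d r s : ℕ} (M : Matrix (Fin d) (Fin d) ℤ)
    (u : Zd d → Matrix (Fin r) (Fin s) ℂ) (γ : Zd d) (ξ : Rd d) :
    Matrix (Fin r) (Fin s) ℂ :=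
  ∑ᶠ p : Zd d, Complex.exp (-(Complex.I * (dotZR p ξ : ℂ))) • u (γ + mulVecZ M p)

/-- scalar version of the coset symbol -/
def cosetSymbolF {d : ℕ} (N : Matrix (Fin d) (Fin d) ℤ) (u : Zd d → ℂ) (γ : Zd d)
    (ξ : Rd d) : ℂ :=
  ∑ᶠ p : Zd d, Complex.exp (-(Complex.I * (dotZR p ξ : ℂ))) * u (γ + mulVecZ N p)

/-- subdivision operator `S_{u,M} w = |det M|^{1/2} (w↑M) * u` -/
def sdOp {d p q : ℕ} (M : Matrix (Fin d) (Fin d) ℤ) (u : Zd d →₀ Matrix (Fin p) (Fin q) ℂ)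
    (w : Zd d → Matrix (Fin 1) (Fin p) ℂ) : Zd d → Matrix (Fin 1) (Fin q) ℂ :=
  fun n => (Real.sqrt (M.det.natAbs) : ℂ) • ∑ᶠ k : Zd d, w k * u (n - mulVecZ M k)

/-- transition operator `T_{u,M} v = |det M|^{1/2} (v * u^*)(M·)` -/
def tzOp {d p q : ℕ} (M : Matrix (Fin d) (Fin d) ℤ) (u : Zd d →₀ Matrix (Fin p) (Fin q) ℂ)
    (v : Zd d → Matrix (Fin 1) (Fin q) ℂ) : Zd d → Matrix (Fin 1) (Fin p) ℂ :=
  fun n => (Real.sqrt (M.det.natAbs) : ℂ) • ∑ᶠ k : Zd d, v k * (u (k - mulVecZ M n))ᴴ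

/-- a polynomial sequence of (total) degree at most `m` -/
def IsPolySeq {d : ℕ} (m : ℕ) (p : Zd d → ℂ) : Prop :=
  ∃ P : MvPolynomial (Fin d) ℂ, P.totalDegree ≤ m ∧
    ∀ k : Zd d, p k = MvPolynomial.eval (fun j => (k j : ℂ)) P

/-- a polynomial sequence of (total) degree less than `m` -/
def IsPolySeqLt {d : ℕ} (m : ℕ) (p : Zd d → ℂ) : Prop :=
  ∃ P : MvPolynomial (Fin d) ℂ, P.totalDegree < m ∧
    ∀ k : Zd d, p k = MvPolynomial.eval (fun j => (k j : ℂ)) P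

/-- convolution `p * y` of a (scalar) polynomial sequence with a finitely supported
row-vector filter -/
def polyConv {d r : ℕ} (p : Zd d → ℂ) (y : Zd d →₀ Matrix (Fin 1) (Fin r) ℂ) :
    Zd d → Matrix (Fin 1) (Fin r) ℂ :=
  fun n => y.sum fun j A => p (n - j) • A

/-- the standard vector conversion operator `E_N` associated with `N` and the coset
representatives `s` -/
def ENop {d r : ℕ} (N : Matrix (Fin d) (Fin d) ℤ) (s : Fin r → Zd d)
    (v : Zd d → ℂ) : Zd d → Matrix (Fin 1) (Fin r) ℂ :=
  fun k => Matrix.of fun _ j => v (mulVecZ N k + s j)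

/-- the row vector `Υ_N(ξ) = (e^{i N^{-1} s_1 · ξ}, …, e^{i N^{-1} s_r · ξ})` -/
def UpsN {d r : ℕ} (N : Matrix (Fin d) (Fin d) ℤ) (s : Fin r → Zd d) (ξ : Rd d) :
    Matrix (Fin 1) (Fin r) ℂ :=
  Matrix.of fun _ j => Complex.exp (Complex.I *
    ((∑ t, ((N.map fun z => (z : ℝ))⁻¹.mulVec fun i => (s j i : ℝ)) t * ξ t : ℝ) : ℂ))

/-- the sequence `∇^β δ`, whose symbol is `Π_j (1 - e^{-iξ_j})^{β_j}` -/
def nablaDelta {d : ℕ} (β : Fin d → ℕ) : Zd d → ℂ :=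
  fun k => ∏ j, if 0 ≤ k j then ((-1 : ℂ) ^ (k j).toNat * ((β j).choose (k j).toNat : ℂ)) else 0

/-- the matrix `F_{r;M}(ξ) = (e^{-i γ_l · (ξ + 2π ω_k)} I_r)_{l,k}` -/
def FMat {d r n : ℕ} (γ : Fin n → Zd d) (ω : Fin n → Rd d) (ξ : Rd d) :
    Matrix (Fin n × Fin r) (Fin n × Fin r) ℂ :=
  Matrix.of fun li kj =>
    if li.2 = kj.2 then
      Complex.exp (-(Complex.I * (dotZR (γ li.1) (ξ + (2 * Real.pi) • ω kj.1) : ℂ)))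
    else 0

/-- the matrix `D_{u,ω;M}(ξ)` whose `(l,k)`-th `r×r` block is `û(ξ+2πω)` when
`ω_l + ω - ω_k ∈ ℤ^d` and `0` otherwise -/
def DMat {d r n : ℕ} (u : Zd d →₀ Matrix (Fin r) (Fin r) ℂ) (ω : Fin n → Rd d)
    (ωv : Rd d) (ξ : Rd d) : Matrix (Fin n × Fin r) (Fin n × Fin r) ℂ :=
  Matrix.of fun li kj =>
    if ∀ i, ∃ z : ℤ, (ω li.1 + ωv - ω kj.1) i = (z : ℝ) then
      symbol u (ξ + (2 * Real.pi) • ωv) li.2 kj.2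
    else 0

/-- the matrix `E_{u,ω;M}(ξ)` whose `(l,k)`-th block is `û^{[γ_k-γ_l;M]}(ξ) e^{-iγ_k·(2πω)}` -/
def EMat {d r n : ℕ} (M : Matrix (Fin d) (Fin d) ℤ)
    (u : Zd d →₀ Matrix (Fin r) (Fin r) ℂ) (γ : Fin n → Zd d)
    (ωv : Rd d) (ξ : Rd d) : Matrix (Fin n × Fin r) (Fin n × Fin r) ℂ :=
  Matrix.of fun li kj =>
    (Complex.exp (-(Complex.I * (dotZR (γ kj.1) ((2 * Real.pi) • ωv) : ℂ))) •
      cosetSymbol M (fun k => u k) (γ kj.1 - γ li.1) ξ) li.2 kj.2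

/-- the matrix `P_{u;M}(ξ) = [û(ξ+2πω_1), …, û(ξ+2πω_{d_M})]` -/
def PMat {d r sc n : ℕ} (u : Zd d →₀ Matrix (Fin sc) (Fin r) ℂ) (ω : Fin n → Rd d)
    (ξ : Rd d) : Matrix (Fin sc) (Fin n × Fin r) ℂ :=
  Matrix.of fun i kj => symbol u (ξ + (2 * Real.pi) • ω kj.1) i kj.2

/-- the matrix `Q_{u;M}(ξ) = [û^{[γ_1;M]}(ξ), …, û^{[γ_{d_M};M]}(ξ)]` -/
def QMat {d r sc n : ℕ} (M : Matrix (Fin d) (Fin d) ℤ)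
    (u : Zd d →₀ Matrix (Fin sc) (Fin r) ℂ) (γ : Fin n → Zd d)
    (ξ : Rd d) : Matrix (Fin sc) (Fin n × Fin r) ℂ :=
  Matrix.of fun i kj => cosetSymbol M (fun k => u k) (γ kj.1) ξ i kj.2

/-- `j`-fold application of the transition operator with low-pass filter `a`:
the low-pass framelet coefficients `v_j` -/
def tzIter {d r : ℕ} (M : Matrix (Fin d) (Fin d) ℤ)
    (a : Zd d →₀ Matrix (Fin r) (Fin r) ℂ)
    (v0 : Zd d → Matrix (Fin 1) (Fin r) ℂ) : ℕ → Zd d → Matrix (Fin 1) (Fin r) ℂ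
  | 0 => v0
  | j + 1 => tzOp M a (tzIter M a v0 j)

/-- reconstruction: `reconIter … J i = ṽ_{J-i}` for the `J`-level discrete framelet
transform with filter bank `({a;b},{atil;btil})_Θ` applied to input `v0` -/
def reconIter {d r sc : ℕ} (M : Matrix (Fin d) (Fin d) ℤ)
    (a : Zd d →₀ Matrix (Fin r) (Fin r) ℂ) (b : Zd d →₀ Matrix (Fin sc) (Fin r) ℂ)
    (atil : Zd d →₀ Matrix (Fin r) (Fin r) ℂ) (btil : Zd d →₀ Matrix (Fin sc) (Fin r) ℂ)
    (Θ : Zd d →₀ Matrix (Fin r) (Fin r) ℂ)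
    (v0 : Zd d → Matrix (Fin 1) (Fin r) ℂ) (J : ℕ) : ℕ → Zd d → Matrix (Fin 1) (Fin r) ℂ
  | 0 => convSeq (tzIter M a v0 J) Θ
  | i + 1 => fun n =>
      sdOp M atil (reconIter M a b atil btil Θ v0 J i) n +
      sdOp M btil (tzOp M b (tzIter M a v0 (J - i - 1))) n

/-- the `J`-level discrete framelet transform has the perfect reconstruction property:
every input `v0` is exactly and uniquely recovered via the deconvolution `x * Θ = ṽ_0` -/
def PerfectReconstruction {d r sc : ℕ} (M : Matrix (Fin d) (Fin d) ℤ)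
    (a : Zd d →₀ Matrix (Fin r) (Fin r) ℂ) (b : Zd d →₀ Matrix (Fin sc) (Fin r) ℂ)
    (atil : Zd d →₀ Matrix (Fin r) (Fin r) ℂ) (btil : Zd d →₀ Matrix (Fin sc) (Fin r) ℂ)
    (Θ : Zd d →₀ Matrix (Fin r) (Fin r) ℂ) (J : ℕ) : Prop :=
  ∀ v0 : Zd d → Matrix (Fin 1) (Fin r) ℂ,
    convSeq v0 Θ = reconIter M a b atil btil Θ v0 J J ∧
    ∀ x, convSeq x Θ = reconIter M a b atil btil Θ v0 J J → x = v0

section AuxLemmas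

/-! ### Auxiliary lemmas for stmt14 -/

open MvPolynomial in
lemma aeval_eq_eval' {d : ℕ} (f : Fin d → ℂ) (p : MvPolynomial (Fin d) ℂ) :
    (MvPolynomial.aeval f) p = MvPolynomial.eval f p := by
  rw [MvPolynomial.aeval_def, MvPolynomial.eval, MvPolynomial.coe_eval₂Hom, Algebra.algebraMap_self]

lemma totalDegree_bind1_le {d : ℕ} (g : Fin d → MvPolynomial (Fin d) ℂ)
    (hg : ∀ l, (g l).totalDegree ≤ 1) (P : MvPolynomial (Fin d) ℂ) :
    (MvPolynomial.bind₁ g P).totalDegree ≤ P.totalDegree := by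
  conv_lhs => rw [P.as_sum]
  rw [map_sum]
  refine (MvPolynomial.totalDegree_finset_sum _ _).trans (Finset.sup_le ?_)
  intro β hβ
  rw [MvPolynomial.bind₁_monomial]
  refine (MvPolynomial.totalDegree_mul _ _).trans ?_
  rw [MvPolynomial.totalDegree_C, zero_add]
  refine le_trans ?_ (MvPolynomial.le_totalDegree hβ)
  refine (MvPolynomial.totalDegree_finset_prod _ _).trans ?_
  have : ∀ l ∈ β.support, ((g l) ^ (β l)).totalDegree ≤ β l := by
    intro l _
    refine (MvPolynomial.totalDegree_pow _ _).trans ?_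
    calc β l * (g l).totalDegree ≤ β l * 1 := Nat.mul_le_mul_left _ (hg l)
      _ = β l := Nat.mul_one _
  refine (Finset.sum_le_sum this).trans ?_
  rw [Finsupp.sum]

lemma prod_pow_eq_list {d : ℕ} (β : Fin d →₀ ℕ) (x : Fin d → ℂ) :
    ((β.toMultiset.toList).map x).prod = β.prod fun l e => x l ^ e := by
  calc ((β.toMultiset.toList).map x).prod
      = (((β.toMultiset.toList).map x : List ℂ) : Multiset ℂ).prod := rfl
    _ = (β.toMultiset.map x).prod := by rw [← Multiset.map_coe, Multiset.coe_toList]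
    _ = β.prod fun l e => x l ^ e := by
        rw [Finsupp.toMultiset_map, Finsupp.prod_toMultiset,
          Finsupp.prod_mapDomain_index (fun a => pow_zero _) (fun a m n => pow_add _ _ _)]

lemma momF_iff_poly {d : ℕ} {ι : Type} (T : Finset ι) (c : ι → ℂ) (x : ι → Fin d → ℂ)
    (m : ℕ) :
    (∀ j, j < m → ∀ g : Fin j → Fin d, ∑ t ∈ T, c t * ∏ i, x t (g i) = 0) ↔
    (∀ Q : MvPolynomial (Fin d) ℂ, Q.totalDegree < m →
      ∑ t ∈ T, c t * MvPolynomial.eval (x t) Q = 0) := by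
  constructor
  · intro H Q hQ
    have hsplit : ∀ t, MvPolynomial.eval (x t) Q
        = ∑ β ∈ Q.support, MvPolynomial.eval (x t) (MvPolynomial.monomial β (Q.coeff β)) := by
      intro t
      conv_lhs => rw [Q.as_sum]
      rw [map_sum]
    simp only [hsplit, Finset.mul_sum]
    rw [Finset.sum_comm]
    refine Finset.sum_eq_zero fun β hβ => ?_
    have hdeg : (β.sum fun _ e => e) < m := lt_of_le_of_lt (MvPolynomial.le_totalDegree hβ) hQ
    set L : List (Fin d) := β.toMultiset.toList with hL
    have hlen : L.length = β.sum fun _ e => e := by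
      rw [hL, Multiset.length_toList, Finsupp.card_toMultiset]; rfl
    have hprod : ∀ t, (∏ i : Fin L.length, x t (L.get i)) = β.prod fun l e => x t l ^ e := by
      intro t
      rw [← prod_pow_eq_list β (x t), ← Fin.prod_univ_fun_getElem]
      rfl
    have hmom := H L.length (by rw [hlen]; exact hdeg) (fun i => L.get i)
    simp only [hprod] at hmom
    calc ∑ t ∈ T, c t * MvPolynomial.eval (x t) (MvPolynomial.monomial β (Q.coeff β))
        = ∑ t ∈ T, Q.coeff β * (c t * β.prod fun l e => x t l ^ e) := by
          refine Finset.sum_congr rfl fun t _ => ?_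
          rw [MvPolynomial.eval_monomial]; ring
      _ = Q.coeff β * ∑ t ∈ T, c t * β.prod fun l e => x t l ^ e := by rw [Finset.mul_sum]
      _ = 0 := by rw [hmom, mul_zero]
  · intro H j hj g
    have hQ : (∏ i : Fin j, (MvPolynomial.X (g i) : MvPolynomial (Fin d) ℂ)).totalDegree < m := by
      refine lt_of_le_of_lt ((MvPolynomial.totalDegree_finset_prod _ _).trans ?_) hj
      have : ∀ i ∈ (Finset.univ : Finset (Fin j)),
          (MvPolynomial.X (g i) : MvPolynomial (Fin d) ℂ).totalDegree ≤ 1 := by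
        intro i _; rw [MvPolynomial.totalDegree_X]
      refine (Finset.sum_le_sum this).trans ?_
      simp
    have := H _ hQ
    simpa [MvPolynomial.eval_prod] using this

lemma polyCond_transfer {d : ℕ} {ι : Type} (T : Finset ι) (c : ι → ℂ) (x y : ι → Fin d → ℂ)
    (AC : Fin d → Fin d → ℂ) (off : Fin d → ℂ) (m : ℕ)
    (hxy : ∀ t ∈ T, ∀ l, y t l = (∑ u, AC l u * x t u) + off l)
    (h : ∀ Q : MvPolynomial (Fin d) ℂ, Q.totalDegree < m →
      ∑ t ∈ T, c t * MvPolynomial.eval (x t) Q = 0) :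
    ∀ P : MvPolynomial (Fin d) ℂ, P.totalDegree < m →
      ∑ t ∈ T, c t * MvPolynomial.eval (y t) P = 0 := by
  intro P hP
  set g : Fin d → MvPolynomial (Fin d) ℂ :=
    fun l => (∑ u, MvPolynomial.C (AC l u) * MvPolynomial.X u) + MvPolynomial.C (off l) with hgdef
  have hg : ∀ l, (g l).totalDegree ≤ 1 := by
    intro l
    refine (MvPolynomial.totalDegree_add _ _).trans (max_le ?_ ?_)
    · refine (MvPolynomial.totalDegree_finset_sum _ _).trans (Finset.sup_le fun u _ => ?_)
      refine (MvPolynomial.totalDegree_mul _ _).trans ?_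
      rw [MvPolynomial.totalDegree_C, MvPolynomial.totalDegree_X, zero_add]
    · rw [MvPolynomial.totalDegree_C]; exact Nat.zero_le _
  have heval : ∀ t ∈ T, MvPolynomial.eval (x t) (MvPolynomial.bind₁ g P)
      = MvPolynomial.eval (y t) P := by
    intro t ht
    have harg : (fun l => (MvPolynomial.aeval (x t)) (g l)) = y t := by
      funext l
      simp [hgdef, hxy t ht, aeval_eq_eval']
    rw [← aeval_eq_eval', MvPolynomial.aeval_bind₁, harg, aeval_eq_eval']
  have := h (MvPolynomial.bind₁ g P) (lt_of_le_of_lt (totalDegree_bind1_le g hg P) hP)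
  rw [← this]
  exact Finset.sum_congr rfl fun t ht => by rw [heval t ht]

def linW {d : ℕ} (w : Rd d) : Rd d →L[ℝ] ℝ :=
  ∑ l, w l • ContinuousLinearMap.proj l

lemma linW_apply {d : ℕ} (w ξ : Rd d) : linW w ξ = ∑ l, w l * ξ l := by
  simp [linW, ContinuousLinearMap.sum_apply, ContinuousLinearMap.proj_apply, smul_eq_mul]

def fC : ℝ → ℂ := fun t => Complex.exp (Complex.I * t)

lemma contDiff_fC (n : ℕ) : ContDiff ℝ n fC := by
  have h : ContDiff ℝ n fun t : ℝ => (Complex.I * t : ℂ) :=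
    contDiff_const.mul Complex.ofRealCLM.contDiff
  exact h.cexp

lemma hasDerivAt_fC (x : ℝ) : HasDerivAt fC (Complex.I * fC x) x := by
  have h1 : HasDerivAt (fun z : ℂ => Complex.exp (Complex.I * z))
      (Complex.exp (Complex.I * (x : ℂ)) * (Complex.I * 1)) (x : ℂ) :=
    (Complex.hasDerivAt_exp (Complex.I * (x : ℂ))).comp (x : ℂ)
      ((hasDerivAt_id (x : ℂ)).const_mul Complex.I)
  have h2 := h1.comp_ofReal
  have h3 : HasDerivAt (fun y : ℝ => Complex.exp (Complex.I * y)) (Complex.I * fC x) x := by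
    simpa [fC, mul_comm] using h2
  exact h3

lemma iteratedDeriv_fC (n : ℕ) (x : ℝ) :
    iteratedDeriv n fC x = Complex.I ^ n * fC x := by
  induction n generalizing x with
  | zero => simp
  | succ n ih =>
    rw [iteratedDeriv_succ]
    have hfn : iteratedDeriv n fC = fun y => Complex.I ^ n * fC y := funext ih
    rw [hfn]
    have := ((hasDerivAt_fC x).const_mul (Complex.I ^ n)).deriv
    rw [this]; ring

lemma expw_eq {d : ℕ} (w : Rd d) :
    (fun ξ : Rd d => Complex.exp (Complex.I * ((∑ l, w l * ξ l : ℝ) : ℂ)))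
      = fC ∘ (linW w) := by
  funext ξ; simp [fC, linW_apply]

lemma iteratedFDeriv_expw {d : ℕ} (w : Rd d) (j : ℕ) (v : Fin j → Rd d) :
    iteratedFDeriv ℝ j (fun ξ : Rd d => Complex.exp (Complex.I * ((∑ l, w l * ξ l : ℝ) : ℂ))) 0 v
      = (∏ i, ((∑ l, w l * v i l : ℝ) : ℂ)) * Complex.I ^ j := by
  rw [expw_eq w, ContinuousLinearMap.iteratedFDeriv_comp_right (linW w) (contDiff_fC j) 0 le_rfl]
  rw [ContinuousMultilinearMap.compContinuousLinearMap_apply,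
    iteratedFDeriv_apply_eq_iteratedDeriv_mul_prod, map_zero, iteratedDeriv_fC]
  simp only [fC, Complex.ofReal_zero, mul_zero, Complex.exp_zero, mul_one]
  rw [Complex.real_smul, Complex.ofReal_prod]
  simp [linW_apply]

lemma contDiff_expw {d : ℕ} (w : Rd d) (j : ℕ) :
    ContDiff ℝ j (fun ξ : Rd d => Complex.exp (Complex.I * ((∑ l, w l * ξ l : ℝ) : ℂ))) := by
  rw [expw_eq w]; exact (contDiff_fC j).comp (linW w).contDiff

lemma iteratedFDeriv_sum_expw {d : ℕ} {ι : Type} (T : Finset ι) (c : ι → ℂ) (w : ι → Rd d)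
    (j : ℕ) (v : Fin j → Rd d) :
    iteratedFDeriv ℝ j
      (fun ξ : Rd d => ∑ t ∈ T, c t * Complex.exp (Complex.I * ((∑ l, w t l * ξ l : ℝ) : ℂ))) 0 v
      = ∑ t ∈ T, c t * ((∏ i, ((∑ l, w t l * v i l : ℝ) : ℂ)) * Complex.I ^ j) := by
  have h1 : iteratedFDeriv ℝ j
      (fun ξ : Rd d => ∑ t ∈ T, c t * Complex.exp (Complex.I * ((∑ l, w t l * ξ l : ℝ) : ℂ)))
      = ∑ t ∈ T, iteratedFDeriv ℝ j
          (fun ξ : Rd d => c t * Complex.exp (Complex.I * ((∑ l, w t l * ξ l : ℝ) : ℂ))) := by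
    refine iteratedFDeriv_sum fun t _ => ?_
    exact ContDiff.mul (contDiff_const (c := c t)) (contDiff_expw (w t) j)
  rw [h1]
  simp only [Finset.sum_apply, ContinuousMultilinearMap.sum_apply]
  refine Finset.sum_congr rfl fun t _ => ?_
  have h3 : iteratedFDeriv ℝ j
      (fun ξ : Rd d => c t • Complex.exp (Complex.I * ((∑ l, w t l * ξ l : ℝ) : ℂ))) 0
      = c t • iteratedFDeriv ℝ j
          (fun ξ : Rd d => Complex.exp (Complex.I * ((∑ l, w t l * ξ l : ℝ) : ℂ))) 0 :=
    iteratedFDeriv_const_smul_apply' (contDiff_expw (w t) j).contDiffAt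
  simp only [smul_eq_mul] at h3
  rw [h3, ContinuousMultilinearMap.smul_apply, iteratedFDeriv_expw, smul_eq_mul]

lemma vanishesTo_sum_exp_iff {d : ℕ} {ι : Type} (T : Finset ι) (c : ι → ℂ) (w : ι → Rd d)
    (m : ℕ) :
    vanishesTo m
      (fun ξ : Rd d => ∑ t ∈ T, c t * Complex.exp (Complex.I * ((∑ l, w t l * ξ l : ℝ) : ℂ)))
    ↔ ∀ j, j < m → ∀ g : Fin j → Fin d,
        ∑ t ∈ T, c t * ∏ i, ((w t (g i) : ℝ) : ℂ) = 0 := by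
  constructor
  · intro H j hj g
    have h0 := H j hj
    have h1 := ContinuousMultilinearMap.ext_iff.mp h0 (fun i => Pi.single (g i) 1)
    simp only [ContinuousMultilinearMap.zero_apply] at h1
    rw [iteratedFDeriv_sum_expw] at h1
    have h2 : ∀ t i, (∑ l, w t l * (Pi.single (g i) 1 : Rd d) l) = w t (g i) := by
      intro t i
      simp [Pi.single_apply, mul_ite, Finset.sum_ite_eq']
    simp only [h2] at h1
    have h3 : (∑ t ∈ T, c t * ∏ i, ((w t (g i) : ℝ) : ℂ)) * Complex.I ^ j = 0 := by
      rw [Finset.sum_mul]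
      simpa [mul_assoc] using h1
    have hI : (Complex.I : ℂ) ^ j ≠ 0 := pow_ne_zero _ Complex.I_ne_zero
    exact (mul_eq_zero.mp h3).resolve_right hI
  · intro H j hj
    ext v
    rw [iteratedFDeriv_sum_expw]
    simp only [ContinuousMultilinearMap.zero_apply]
    have expand : ∀ t, (∏ i, ((∑ l, w t l * v i l : ℝ) : ℂ))
        = ∑ g ∈ Fintype.piFinset (fun _ : Fin j => (Finset.univ : Finset (Fin d))),
            ∏ i, (((w t (g i) : ℝ) : ℂ) * ((v i (g i) : ℝ) : ℂ)) := by
      intro t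
      have : ∀ i : Fin j, ((∑ l, w t l * v i l : ℝ) : ℂ)
          = ∑ l, ((w t l : ℝ) : ℂ) * ((v i l : ℝ) : ℂ) := by
        intro i; push_cast; ring
      rw [Finset.prod_congr rfl fun i _ => this i]
      exact Finset.prod_univ_sum _ _
    calc ∑ t ∈ T, c t * ((∏ i, ((∑ l, w t l * v i l : ℝ) : ℂ)) * Complex.I ^ j)
        = ∑ t ∈ T, ∑ g ∈ Fintype.piFinset (fun _ : Fin j => (Finset.univ : Finset (Fin d))),
            c t * ((∏ i, (((w t (g i) : ℝ) : ℂ) * ((v i (g i) : ℝ) : ℂ))) * Complex.I ^ j) := by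
          refine Finset.sum_congr rfl fun t _ => ?_
          rw [expand t, Finset.sum_mul, Finset.mul_sum]
      _ = ∑ g ∈ Fintype.piFinset (fun _ : Fin j => (Finset.univ : Finset (Fin d))),
            (∑ t ∈ T, c t * ∏ i, ((w t (g i) : ℝ) : ℂ))
              * ((∏ i, ((v i (g i) : ℝ) : ℂ)) * Complex.I ^ j) := by
          rw [Finset.sum_comm]
          refine Finset.sum_congr rfl fun g _ => ?_
          rw [Finset.sum_mul]
          refine Finset.sum_congr rfl fun t _ => ?_
          rw [Finset.prod_mul_distrib]; ring
      _ = 0 := by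
          refine Finset.sum_eq_zero fun g _ => ?_
          rw [H j hj g, zero_mul]

end AuxLemmas

section AuxLemmas2

lemma mulVecZ_add {d : ℕ} (N : Matrix (Fin d) (Fin d) ℤ) (a b : Zd d) :
    mulVecZ N (a + b) = mulVecZ N a + mulVecZ N b := by
  funext i
  simp [mulVecZ, mul_add, Finset.sum_add_distrib]

lemma det_ne_zero_of_isDilation {d : ℕ} (M : Matrix (Fin d) (Fin d) ℤ)
    (hM : IsDilation M) : M.det ≠ 0 := by
  intro h0
  have hmap : (M.map fun z : ℤ => (z : ℂ)).det = ((M.det : ℤ) : ℂ) := by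
    rw [show (M.map fun z : ℤ => (z : ℂ)) = (Int.castRingHom ℂ).mapMatrix M from rfl,
      ← RingHom.map_det]
    rfl
  have hnu : ¬ IsUnit (M.map fun z : ℤ => (z : ℂ)) := by
    rw [Matrix.isUnit_iff_isUnit_det, hmap, h0]
    simp
  have h2 : (0 : ℂ) ∈ spectrum ℂ (M.map fun z : ℤ => (z : ℂ)) := by
    rw [spectrum.zero_mem_iff]
    exact hnu
  have := hM 0 h2
  simp only [norm_zero] at this
  exact absurd this (by norm_num)

lemma tz_entry {d r sc : ℕ} (M N : Matrix (Fin d) (Fin d) ℤ) (s : Fin r → Zd d)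
    (b : Zd d →₀ Matrix (Fin sc) (Fin r) ℂ) (p : Zd d → ℂ) (n : Zd d) (i : Fin sc) :
    tzOp M b (ENop N s p) n 0 i
      = (Real.sqrt (M.det.natAbs) : ℂ) *
        ∑ k ∈ b.support, ∑ j : Fin r,
          p (mulVecZ N k + mulVecZ N (mulVecZ M n) + s j) * (starRingEnd ℂ) (b k i j) := by
  unfold tzOp
  rw [Matrix.smul_apply, smul_eq_mul]
  congr 1
  have hsub : (Function.support fun k => ENop N s p k * (b (k - mulVecZ M n))ᴴ)
      ⊆ ↑(b.support.image (fun k => k + mulVecZ M n)) := by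
    intro k hk
    simp only [Function.mem_support] at hk
    by_contra hmem
    apply hk
    have hb : b (k - mulVecZ M n) = 0 := by
      by_contra hb0
      apply hmem
      simp only [Finset.coe_image, Set.mem_image, Finset.mem_coe, Finsupp.mem_support_iff]
      exact ⟨k - mulVecZ M n, hb0, by abel⟩
    rw [hb, Matrix.conjTranspose_zero, Matrix.mul_zero]
  rw [finsum_eq_sum_of_support_subset _ hsub]
  rw [Finset.sum_image (fun a _ c _ h => by simpa using add_right_cancel h)]
  rw [Matrix.sum_apply]
  refine Finset.sum_congr rfl fun k hk => ?_
  rw [Matrix.mul_apply]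
  refine Finset.sum_congr rfl fun j _ => ?_
  have h1 : k + mulVecZ M n - mulVecZ M n = k := by abel
  rw [h1, Matrix.conjTranspose_apply]
  have h2 : ENop N s p (k + mulVecZ M n) 0 j
      = p (mulVecZ N k + mulVecZ N (mulVecZ M n) + s j) := by
    show p (mulVecZ N (k + mulVecZ M n) + s j) = _
    rw [mulVecZ_add]
  rw [h2]
  rfl

end AuxLemmas2

section AuxLemmas3

/-- `N^{-1} s_j` as a real vector -/
def uu {d r : ℕ} (N : Matrix (Fin d) (Fin d) ℤ) (s : Fin r → Zd d) : Fin r → Rd d :=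
  fun j => (N.map fun z : ℤ => (z : ℝ))⁻¹.mulVec (fun i => (s j i : ℝ))

/-- the real frequencies `k + N^{-1} s_j` -/
def wpF {d r : ℕ} (N : Matrix (Fin d) (Fin d) ℤ) (s : Fin r → Zd d) :
    Zd d × Fin r → Rd d :=
  fun t l => (t.1 l : ℝ) + uu N s t.2 l

/-- the complexified frequencies -/
def xpF {d r : ℕ} (N : Matrix (Fin d) (Fin d) ℤ) (s : Fin r → Zd d) :
    Zd d × Fin r → Fin d → ℂ :=
  fun t l => ((wpF N s t l : ℝ) : ℂ)

/-- the (complexified) integer points `N k + N M n + s_j` -/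
def ypF {d r : ℕ} (N M : Matrix (Fin d) (Fin d) ℤ) (s : Fin r → Zd d) (n : Zd d) :
    Zd d × Fin r → Fin d → ℂ :=
  fun t l => (((mulVecZ N t.1 + mulVecZ N (mulVecZ M n) + s t.2) l : ℤ) : ℂ)

lemma mulVec_uu {d r : ℕ} (N : Matrix (Fin d) (Fin d) ℤ) (s : Fin r → Zd d)
    (hA : IsUnit (N.map fun z : ℤ => (z : ℝ)).det) (j : Fin r) :
    (N.map fun z : ℤ => (z : ℝ)).mulVec (uu N s j) = fun i => (s j i : ℝ) := by
  rw [uu, Matrix.mulVec_mulVec, Matrix.mul_nonsing_inv _ hA, Matrix.one_mulVec]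

lemma mulVec_intCast {d : ℕ} (N : Matrix (Fin d) (Fin d) ℤ) (k : Zd d) :
    (N.map fun z : ℤ => (z : ℝ)).mulVec (fun l => (k l : ℝ))
      = fun t => ((mulVecZ N k t : ℤ) : ℝ) := by
  funext t
  simp only [Matrix.mulVec, dotProduct, Matrix.map_apply, mulVecZ]
  push_cast
  rfl

lemma I1F {d r : ℕ} (N M : Matrix (Fin d) (Fin d) ℤ) (s : Fin r → Zd d)
    (hA : IsUnit (N.map fun z : ℤ => (z : ℝ)).det) (n : Zd d) (t : Zd d × Fin r) (l : Fin d) :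
    ypF N M s n t l = (∑ u', ((N l u' : ℤ) : ℂ) * xpF N s t u')
      + ((mulVecZ N (mulVecZ M n) l : ℤ) : ℂ) := by
  obtain ⟨k, j⟩ := t
  have hreal : ∑ u', (N l u' : ℝ) * wpF N s (k, j) u'
      = ((mulVecZ N k l : ℤ) : ℝ) + (s j l : ℝ) := by
    have h1 : ∑ u', (N l u' : ℝ) * wpF N s (k, j) u'
        = ((N.map fun z : ℤ => (z : ℝ)).mulVec (fun u' => (k u' : ℝ))) l
          + ((N.map fun z : ℤ => (z : ℝ)).mulVec (uu N s j)) l := by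
      simp only [Matrix.mulVec, dotProduct, Matrix.map_apply]
      rw [← Finset.sum_add_distrib]
      refine Finset.sum_congr rfl fun u' _ => ?_
      rw [show wpF N s (k, j) u' = (k u' : ℝ) + uu N s j u' from rfl]
      ring
    rw [h1, mulVec_uu N s hA j, mulVec_intCast N k]
  have hc := congrArg (fun x : ℝ => (x : ℂ)) hreal
  push_cast at hc
  have hy : ypF N M s n (k, j) l
      = ((mulVecZ N k l : ℤ) : ℂ) + ((s j l : ℤ) : ℂ)
        + ((mulVecZ N (mulVecZ M n) l : ℤ) : ℂ) := by
    rw [ypF]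
    push_cast [Pi.add_apply]
    ring
  rw [hy]
  have hx : ∑ u', ((N l u' : ℤ) : ℂ) * xpF N s (k, j) u'
      = ∑ u', ((N l u' : ℤ) : ℂ) * ((wpF N s (k, j) u' : ℝ) : ℂ) :=
    Finset.sum_congr rfl fun u' _ => rfl
  rw [hx, hc]

lemma I2F {d r : ℕ} (N M : Matrix (Fin d) (Fin d) ℤ) (s : Fin r → Zd d)
    (hA : IsUnit (N.map fun z : ℤ => (z : ℝ)).det) (t : Zd d × Fin r) (l : Fin d) :
    xpF N s t l = (∑ u', (((N.map fun z : ℤ => (z : ℝ))⁻¹ l u' : ℝ) : ℂ)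
      * ypF N M s 0 t u') + (fun _ : Fin d => (0 : ℂ)) l := by
  obtain ⟨k, j⟩ := t
  have hM0 : mulVecZ M (0 : Zd d) = 0 := by
    funext i; simp [mulVecZ]
  have hN0 : mulVecZ N (mulVecZ M (0 : Zd d)) = 0 := by
    rw [hM0]; funext i; simp [mulVecZ]
  have hyR : (fun i => (((mulVecZ N k + mulVecZ N (mulVecZ M (0 : Zd d)) + s j) i : ℤ) : ℝ))
      = (N.map fun z : ℤ => (z : ℝ)).mulVec (fun l => (k l : ℝ)) + (fun i => (s j i : ℝ)) := by
    funext i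
    rw [mulVec_intCast N k]
    rw [hN0]
    push_cast [Pi.add_apply, Pi.zero_apply]
    ring
  have hreal : (fun l => wpF N s (k, j) l)
      = (N.map fun z : ℤ => (z : ℝ))⁻¹.mulVec
          (fun i => (((mulVecZ N k + mulVecZ N (mulVecZ M (0 : Zd d)) + s j) i : ℤ) : ℝ)) := by
    rw [hyR, Matrix.mulVec_add, Matrix.mulVec_mulVec, Matrix.nonsing_inv_mul _ hA,
      Matrix.one_mulVec]
    funext l'
    rw [show wpF N s (k, j) l' = (k l' : ℝ) + uu N s j l' from rfl]
    rfl
  have hl := congrFun hreal l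
  have hc := congrArg Complex.ofReal hl
  rw [show xpF N s (k, j) l = ((wpF N s (k, j) l : ℝ) : ℂ) from rfl, hc]
  simp only [Matrix.mulVec, dotProduct]
  push_cast
  rw [add_zero]
  refine Finset.sum_congr rfl fun u' _ => ?_
  rw [ypF]

end AuxLemmas3

section AuxLemmas4

lemma symbol_apply {d r sc : ℕ} (b : Zd d →₀ Matrix (Fin sc) (Fin r) ℂ) (ξ : Rd d)
    (i : Fin sc) (j : Fin r) :
    symbol b ξ i j
      = ∑ k ∈ b.support, Complex.exp (-(Complex.I * (dotZR k ξ : ℂ))) * b k i j := by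
  rw [symbol, Finsupp.sum, Matrix.sum_apply]
  exact Finset.sum_congr rfl fun k _ => by rw [Matrix.smul_apply, smul_eq_mul]

lemma conj_exp_neg (x : ℝ) :
    (starRingEnd ℂ) (Complex.exp (-(Complex.I * (x : ℂ))))
      = Complex.exp (Complex.I * (x : ℂ)) := by
  rw [← Complex.exp_conj]
  congr 1
  simp [map_neg, _root_.map_mul, Complex.conj_I, Complex.conj_ofReal]

lemma hfunF {d r sc : ℕ} (N : Matrix (Fin d) (Fin d) ℤ) (s : Fin r → Zd d)
    (b : Zd d →₀ Matrix (Fin sc) (Fin r) ℂ) (i : Fin sc) :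
    (fun ξ : Rd d => (UpsN N s ξ * (symbol b ξ)ᴴ) 0 i)
      = fun ξ : Rd d => ∑ t ∈ b.support ×ˢ (Finset.univ : Finset (Fin r)),
          (starRingEnd ℂ) (b t.1 i t.2)
            * Complex.exp (Complex.I * ((∑ l, wpF N s t l * ξ l : ℝ) : ℂ)) := by
  funext ξ
  rw [Matrix.mul_apply, Finset.sum_product, Finset.sum_comm]
  refine Finset.sum_congr rfl fun j _ => ?_
  have hU : UpsN N s ξ 0 j
      = Complex.exp (Complex.I * ((∑ t', uu N s j t' * ξ t' : ℝ) : ℂ)) := rfl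
  rw [hU, Matrix.conjTranspose_apply, symbol_apply, ← starRingEnd_apply,
    map_sum (starRingEnd ℂ), Finset.mul_sum]
  refine Finset.sum_congr rfl fun k _ => ?_
  rw [_root_.map_mul, conj_exp_neg]
  have hdot : (∑ l, wpF N s (k, j) l * ξ l) = dotZR k ξ + ∑ t', uu N s j t' * ξ t' := by
    rw [dotZR, ← Finset.sum_add_distrib]
    refine Finset.sum_congr rfl fun l _ => ?_
    rw [show wpF N s (k, j) l = (k l : ℝ) + uu N s j l from rfl]
    ring
  rw [hdot, Complex.ofReal_add, mul_add, Complex.exp_add]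
  ring

end AuxLemmas4

/-- `b` has order `m` `E_N`-balanced vanishing moments, i.e.
`T_{b,M} E_N(p) = 0` for all polynomial sequences of degree `< m`, iff
`Υ_N(ξ) \overline{b̂(ξ)}^T = O(‖ξ‖^m)` as `ξ → 0`. -/
theorem stmt14 {d r sc : ℕ} (M : Matrix (Fin d) (Fin d) ℤ) (hM : IsDilation M)
    (N : Matrix (Fin d) (Fin d) ℤ) (hr : 2 ≤ r) (hdet : N.det.natAbs = r)
    (s : Fin r → Zd d) (hs0 : ∀ j : Fin r, (j : ℕ) = 0 → s j = 0)
    (hs : ∀ k : Zd d, ∃! jp : Fin r × Zd d, k = s jp.1 + mulVecZ N jp.2)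
    (m : ℕ) (b : Zd d →₀ Matrix (Fin sc) (Fin r) ℂ) :
    (∀ p : Zd d → ℂ, IsPolySeqLt m p → tzOp M b (ENop N s p) = 0) ↔
      (∀ i : Fin sc,
        vanishesTo m (fun ξ => (UpsN N s ξ * (symbol b ξ)ᴴ) 0 i)) := by
  classical
  -- basic nondegeneracy
  have hNdet : N.det ≠ 0 := by
    intro h
    rw [h] at hdet
    simp at hdet
    omega
  have hA : IsUnit (N.map fun z : ℤ => (z : ℝ)).det := by
    have hmap : (N.map fun z : ℤ => (z : ℝ)).det = ((N.det : ℤ) : ℝ) := by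
      rw [show (N.map fun z : ℤ => (z : ℝ)) = (Int.castRingHom ℝ).mapMatrix N from rfl,
        ← RingHom.map_det]
      rfl
    rw [hmap]
    exact isUnit_iff_ne_zero.mpr (by exact_mod_cast hNdet)
  have hMdet := det_ne_zero_of_isDilation M hM
  have hsqrt : (Real.sqrt (M.det.natAbs) : ℂ) ≠ 0 := by
    rw [Complex.ofReal_ne_zero]
    refine Real.sqrt_ne_zero'.mpr ?_
    exact_mod_cast Int.natAbs_pos.mpr hMdet
  set T : Finset (Zd d × Fin r) := b.support ×ˢ (Finset.univ : Finset (Fin r)) with hTdef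
  set cc : Fin sc → Zd d × Fin r → ℂ := fun i t => (starRingEnd ℂ) (b t.1 i t.2) with hcdef
  -- reformulate the right-hand side
  have hchain : ∀ i : Fin sc,
      vanishesTo m (fun ξ => (UpsN N s ξ * (symbol b ξ)ᴴ) 0 i) ↔
        (∀ Q : MvPolynomial (Fin d) ℂ, Q.totalDegree < m →
          ∑ t ∈ T, cc i t * MvPolynomial.eval (xpF N s t) Q = 0) := by
    intro i
    rw [hfunF N s b i]
    exact (vanishesTo_sum_exp_iff T (cc i) (wpF N s) m).trans
      (momF_iff_poly T (cc i) (xpF N s) m)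
  -- reformulate the left-hand side
  have hLHS : (∀ p : Zd d → ℂ, IsPolySeqLt m p → tzOp M b (ENop N s p) = 0) ↔
      (∀ P : MvPolynomial (Fin d) ℂ, P.totalDegree < m → ∀ n : Zd d, ∀ i : Fin sc,
        ∑ t ∈ T, cc i t * MvPolynomial.eval (ypF N M s n t) P = 0) := by
    constructor
    · intro hp P hPd n i
      have h0 := hp (fun k => MvPolynomial.eval (fun l => ((k l : ℤ) : ℂ)) P)
        ⟨P, hPd, fun k => rfl⟩
      have h1 := congrFun h0 n
      have h2 : tzOp M b (ENop N s
          (fun k => MvPolynomial.eval (fun l => ((k l : ℤ) : ℂ)) P)) n 0 i = 0 := by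
        rw [h1]; rfl
      rw [tz_entry] at h2
      have h3 := (mul_eq_zero.mp h2).resolve_left hsqrt
      rw [← h3, Finset.sum_product]
      exact Finset.sum_congr rfl fun k _ => Finset.sum_congr rfl fun j _ => mul_comm _ _
    · intro h p hps
      obtain ⟨P, hPd, hpev⟩ := hps
      have hpfun : p = fun k => MvPolynomial.eval (fun l => ((k l : ℤ) : ℂ)) P := funext hpev
      rw [hpfun]
      funext n
      refine Matrix.ext fun a i => ?_
      have ha : a = 0 := Subsingleton.elim a 0
      subst ha
      rw [tz_entry]
      have h4 := h P hPd n i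
      rw [Finset.sum_product] at h4
      have h5 : (∑ k ∈ b.support, ∑ j : Fin r,
          MvPolynomial.eval
            (fun l => (((mulVecZ N k + mulVecZ N (mulVecZ M n) + s j) l : ℤ) : ℂ)) P
            * (starRingEnd ℂ) (b k i j)) = 0 := by
        rw [← h4]
        exact Finset.sum_congr rfl fun k _ => Finset.sum_congr rfl fun j _ => mul_comm _ _
      exact mul_eq_zero_of_right _ h5
  rw [hLHS]
  constructor
  · intro hY i
    refine (hchain i).mpr ?_
    refine polyCond_transfer T (cc i) (ypF N M s 0) (xpF N s)
      (fun l u' => (((N.map fun z : ℤ => (z : ℝ))⁻¹ l u' : ℝ) : ℂ)) (fun _ => 0) m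
      (fun t _ l => I2F N M s hA t l) (fun Q hQ => hY Q hQ 0 i)
  · intro hV P hP n i
    have hX := (hchain i).mp (hV i)
    exact polyCond_transfer T (cc i) (xpF N s) (ypF N M s n)
      (fun l u' => ((N l u' : ℤ) : ℂ))
      (fun l => ((mulVecZ N (mulVecZ M n) l : ℤ) : ℂ)) m
      (fun t _ l => I1F N M s hA n t l) hX P hP

end
end

section
/- (Quasi-tight framelet filter bank ↔ generalized spectral factorization.) Let M be a d×d dilation matrix, a ∈ (l₀(ℤ^d))^{r×r}, Θ ∈ (l₀(ℤ^d))^{r×r} Hermitian (\overline{\widehat{Θ}(ξ)}^T = \widehat{Θ}(ξ)), b ∈ (l₀(ℤ^d))^{s×r}, and ε₁,…,ε_s ∈ {±1}. Then the filter bank identity \overline{\widehat{a}(ξ)}^T \widehat{Θ}(M^T ξ) \widehat{a}(ξ+2πω) + \overline{\widehat{b}(ξ)}^T diag(ε₁,…,ε_s) \widehat{b}(ξ+2πω) = δ(ω) \widehat{Θ}(ξ) for all ξ ∈ ℝ^d and ω ∈ Ω_M is equivalent to the single matrix identity \overline{P_{b;M}(ξ)}^T diag(ε₁,…,ε_s)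 P_{b;M}(ξ) = diag(\widehat{Θ}(ξ+2πω₁),…,\widehat{Θ}(ξ+2πω_{d_M})) − \overline{P_{a;M}(ξ)}^T \widehat{Θ}(M^T ξ) P_{a;M}(ξ), where P_{u;M}(ξ) := [\widehat{u}(ξ+2πω₁),…,\widehat{u}(ξ+2πω_{d_M})]. -/
open scoped BigOperators Classical
open Complex Matrix

noncomputable section

/-- periodicity of the symbol: shifting by `2π` times an integer vector -/
lemma symbol_shift {d r s : ℕ} (u : Zd d →₀ Matrix (Fin r) (Fin s) ℂ) (ξ v : Rd d)
    (hv : ∀ i, ∃ z : ℤ, v i = (z : ℝ)) :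
    symbol u (ξ + (2 * Real.pi) • v) = symbol u ξ := by
  choose z hz using hv
  unfold symbol
  refine Finsupp.sum_congr fun k _ => ?_
  have h1 : dotZR k (ξ + (2 * Real.pi) • v)
      = dotZR k ξ + 2 * Real.pi * ((∑ j, k j * z j : ℤ) : ℝ) := by
    unfold dotZR
    push_cast
    simp only [Pi.add_apply, Pi.smul_apply, smul_eq_mul]
    rw [Finset.mul_sum, ← Finset.sum_add_distrib]
    refine Finset.sum_congr rfl fun j _ => ?_
    rw [hz j]; ring
  rw [h1]
  congr 1
  have h2 : -(Complex.I * ((dotZR k ξ + 2 * Real.pi * ((∑ j, k j * z j : ℤ) : ℝ) : ℝ) : ℂ))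
      = -(Complex.I * ((dotZR k ξ : ℝ) : ℂ)) +
        ((-(∑ j, k j * z j : ℤ) : ℤ) : ℂ) * (2 * Real.pi * Complex.I) := by
    push_cast; ring
  rw [h2, Complex.exp_add, Complex.exp_int_mul_two_pi_mul_I, mul_one]

lemma mulVecT_add {d : ℕ} (M : Matrix (Fin d) (Fin d) ℤ) (x y : Rd d) :
    mulVecT M (x + y) = mulVecT M x + mulVecT M y := by
  funext i
  simp only [mulVecT, Pi.add_apply]
  rw [← Finset.sum_add_distrib]
  exact Finset.sum_congr rfl fun j _ => by ring

lemma mulVecT_smul {d : ℕ} (M : Matrix (Fin d) (Fin d) ℤ) (c : ℝ) (x : Rd d) :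
    mulVecT M (c • x) = c • mulVecT M x := by
  funext i
  simp only [mulVecT, Pi.smul_apply, smul_eq_mul, Finset.mul_sum]
  exact Finset.sum_congr rfl fun j _ => by ring

/-- entry formula for `Xᴴ C Y` built from `PMat` -/
lemma PMat_triple {d r sc nM : ℕ} (u w : Zd d →₀ Matrix (Fin sc) (Fin r) ℂ)
    (C : Matrix (Fin sc) (Fin sc) ℂ) (ω : Fin nM → Rd d) (ξ : Rd d)
    (k k' : Fin nM) (i j : Fin r) :
    ((PMat u ω ξ)ᴴ * C * PMat w ω ξ) (k, i) (k', j)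
      = ((symbol u (ξ + (2 * Real.pi) • ω k))ᴴ * C *
          symbol w (ξ + (2 * Real.pi) • ω k')) i j := by
  simp [Matrix.mul_apply, PMat, Matrix.conjTranspose_apply]

/-- the quasi-tight framelet filter bank identity holds for all `ξ` and
all `ω ∈ Ω_M` iff the single generalized matrix spectral factorization identity
`\overline{P_{b;M}}^T diag(ε) P_{b;M} = M_{a,Θ}` holds. -/
theorem stmt16 {d r sc nM : ℕ} (M : Matrix (Fin d) (Fin d) ℤ) (hM : IsDilation M)
    (hcard : nM = M.det.natAbs)
    (ω : Fin nM → Rd d) (hω0 : ∀ l : Fin nM, (l : ℕ) = 0 → ω l = 0)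
    (hωmem : ∀ l, ω l ∈ OmegaSet M) (hωinj : Function.Injective ω)
    (hωsurj : ∀ x ∈ OmegaSet M, ∃ l, ω l = x)
    (a Θ : Zd d →₀ Matrix (Fin r) (Fin r) ℂ)
    (hΘ : ∀ ξ : Rd d, (symbol Θ ξ)ᴴ = symbol Θ ξ)
    (b : Zd d →₀ Matrix (Fin sc) (Fin r) ℂ)
    (ε : Fin sc → ℂ) (hε : ∀ l, ε l = 1 ∨ ε l = -1) :
    (∀ ξ : Rd d, ∀ ωv ∈ OmegaSet M,
        (symbol a ξ)ᴴ * symbol Θ (mulVecT M ξ) * symbol a (ξ + (2 * Real.pi) • ωv) +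
          (symbol b ξ)ᴴ * Matrix.diagonal ε * symbol b (ξ + (2 * Real.pi) • ωv) =
        (if ωv = (0 : Rd d) then 1 else 0) • symbol Θ ξ) ↔
      (∀ ξ : Rd d,
        (PMat b ω ξ)ᴴ * Matrix.diagonal ε * PMat b ω ξ =
          (Matrix.of fun ki k'j =>
            if ki.1 = k'j.1 then symbol Θ (ξ + (2 * Real.pi) • ω ki.1) ki.2 k'j.2 else 0) -
          (PMat a ω ξ)ᴴ * symbol Θ (mulVecT M ξ) * PMat a ω ξ) := by
  constructor
  · intro H ξ
    ext ⟨k, i⟩ ⟨k', j⟩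
    simp only [Matrix.sub_apply, Matrix.of_apply]
    rw [PMat_triple, PMat_triple]
    -- choose the coset representative for ω k' - ω k
    set w : Rd d := fun t => Int.fract ((ω k' - ω k) t) with hwdef
    have hwval : ∀ t, w t = (ω k' - ω k) t - (⌊(ω k' - ω k) t⌋ : ℝ) := fun t => rfl
    have hwmem : w ∈ OmegaSet M := by
      constructor
      · intro t
        obtain ⟨z1, hz1⟩ := (hωmem k').1 t
        obtain ⟨z2, hz2⟩ := (hωmem k).1 t
        refine ⟨z1 - z2 - ∑ j, M j t * ⌊(ω k' - ω k) j⌋, ?_⟩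
        have : mulVecT M w t = mulVecT M (ω k') t - mulVecT M (ω k) t -
            ((∑ j, M j t * ⌊(ω k' - ω k) j⌋ : ℤ) : ℝ) := by
          simp only [mulVecT]
          push_cast
          rw [← Finset.sum_sub_distrib, ← Finset.sum_sub_distrib]
          refine Finset.sum_congr rfl fun s _ => ?_
          rw [hwval s]
          simp only [Pi.sub_apply]
          ring
        rw [this, hz1, hz2]
        push_cast
        ring
      · intro t
        exact ⟨Int.fract_nonneg _, Int.fract_lt_one _⟩
    have key := H (ξ + (2 * Real.pi) • ω k) w hwmem
    -- rewrite Θ(M^T (ξ + 2π ω k)) = Θ(M^T ξ)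
    have hMT : symbol Θ (mulVecT M (ξ + (2 * Real.pi) • ω k)) = symbol Θ (mulVecT M ξ) := by
      rw [mulVecT_add, mulVecT_smul]
      exact symbol_shift Θ _ _ (hωmem k).1
    -- rewrite ξ + 2π ω k + 2π w = (ξ + 2π ω k') + 2π v with v integer
    have hshift : ξ + (2 * Real.pi) • ω k + (2 * Real.pi) • w =
        (ξ + (2 * Real.pi) • ω k') + (2 * Real.pi) •
          (fun t => ((-⌊(ω k' - ω k) t⌋ : ℤ) : ℝ)) := by
      funext t
      simp only [Pi.add_apply, Pi.smul_apply, smul_eq_mul, hwval t, Pi.sub_apply]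
      push_cast
      ring
    have hsa : symbol a (ξ + (2 * Real.pi) • ω k + (2 * Real.pi) • w) =
        symbol a (ξ + (2 * Real.pi) • ω k') := by
      rw [hshift]; exact symbol_shift a _ _ (fun t => ⟨_, rfl⟩)
    have hsb : symbol b (ξ + (2 * Real.pi) • ω k + (2 * Real.pi) • w) =
        symbol b (ξ + (2 * Real.pi) • ω k') := by
      rw [hshift]; exact symbol_shift b _ _ (fun t => ⟨_, rfl⟩)
    have hδ : (w = (0 : Rd d)) ↔ k = k' := by
      constructor
      · intro h
        apply hωinj
        funext t
        have h1 : w t = 0 := congrFun h t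
        rw [hwval t] at h1
        have h2 : (ω k' - ω k) t = (⌊(ω k' - ω k) t⌋ : ℝ) := by linarith
        have hk'1 := (hωmem k').2 t
        have hk1 := (hωmem k).2 t
        have hlow : (-1 : ℝ) < (⌊(ω k' - ω k) t⌋ : ℝ) := by
          rw [← h2]; simp only [Pi.sub_apply]; linarith
        have hhigh : (⌊(ω k' - ω k) t⌋ : ℝ) < 1 := by
          rw [← h2]; simp only [Pi.sub_apply]; linarith
        have h3 : (-1 : ℤ) < ⌊(ω k' - ω k) t⌋ := by exact_mod_cast hlow
        have h4 : ⌊(ω k' - ω k) t⌋ < 1 := by exact_mod_cast hhigh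
        have hz0 : ⌊(ω k' - ω k) t⌋ = 0 := by omega
        rw [hz0] at h2
        simp only [Pi.sub_apply, Int.cast_zero] at h2
        linarith
      · intro h
        subst h
        funext t
        rw [hwval t]
        simp
    rw [hMT, hsa, hsb] at key
    have e := congrArg (fun X : Matrix (Fin r) (Fin r) ℂ => X i j) key
    simp only [Matrix.add_apply, Matrix.smul_apply, smul_eq_mul] at e
    by_cases hc : k = k'
    · rw [if_pos hc]
      rw [if_pos (hδ.mpr hc)] at e
      simp only [one_smul] at e
      linear_combination e
    · rw [if_neg hc]
      rw [if_neg (fun h => hc (hδ.mp h))] at e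
      simp only [zero_smul] at e
      linear_combination e
  · intro H ξ ωv hωv
    obtain ⟨l, hl⟩ := hωsurj ωv hωv
    have h0mem : (0 : Rd d) ∈ OmegaSet M := by
      refine ⟨fun i => ⟨0, ?_⟩, fun i => by norm_num⟩
      simp [mulVecT]
    obtain ⟨k0, hk0⟩ := hωsurj 0 h0mem
    ext i j
    have e := congrArg (fun X : Matrix (Fin nM × Fin r) (Fin nM × Fin r) ℂ =>
      X (k0, i) (l, j)) (H ξ)
    simp only [Matrix.sub_apply, Matrix.of_apply] at e
    rw [PMat_triple, PMat_triple, hk0, hl] at e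
    simp only [smul_zero, add_zero] at e
    have hδ : (k0 = l) ↔ (ωv = 0) :=
      ⟨fun h => by rw [← hl, ← h, hk0], fun h => hωinj (by rw [hk0, hl, h])⟩
    simp only [Matrix.add_apply, Matrix.smul_apply, smul_eq_mul]
    by_cases hc : ωv = (0 : Rd d)
    · rw [if_pos (hδ.mpr hc)] at e
      subst hc
      simp only [eq_self_iff_true, if_true, one_smul, smul_zero, add_zero] at e ⊢
      linear_combination e
    · rw [if_neg hc]
      rw [if_neg (fun h => hc (hδ.mp h))] at e
      simp only [zero_smul]
      linear_combination e


end
end
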